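/- Let F(x) = f(x) + Σ_{k=1}^n Ψ_k(x_k) where f : ℝⁿ → ℝ is convex and differentiable with coordinate Lipschitz constants L_k (i.e., |∇_k f(x + r·e_k) − ∇_k f(x)| ≤ L_k·|r| for all x, r), and each Ψ_k : ℝ → ℝ is convex. Suppose Γ ≥ max_k L_k. Fix a coordinate j and a point x^t; let g_j = ∇_j f(x^t), let g̃_j ∈ ℝ (an inexact gradient value), let d̃_j = argmin_d { g̃_j·d + Γd²/2 + Ψ_j(x_j^t + d) − Ψ_j(x_j^t) }, and let x^{t+1} = x^t + d̃_j·e_j. Define Ŵ_j(g, x) = −min_d { g·d + Γd²/2 + Ψ_j(x + d) − Ψ_j(x) }. Then: F(x^t) − F(x^{t+1}) ≥ (Γ/4)·(d̃_j)² − (1/Γ)·(g_j − g̃_j)². -/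

import Mathlib

lemma descent_1d (φ φ' : ℝ → ℝ) (hφ : ∀ s, HasDerivAt φ (φ' s) s)
    (Γ : ℝ) (hΓ : 0 ≤ Γ) (hlip : ∀ a r, |φ' (a + r) - φ' a| ≤ Γ * |r|)
    (a d : ℝ) : φ (a + d) ≤ φ a + φ' a * d + Γ / 2 * d ^ 2 := by
  set ψ : ℝ → ℝ := fun t => φ (a + t * d) - t * (φ' a * d) - Γ / 2 * t ^ 2 * d ^ 2 with hψ
  have hψd : ∀ t : ℝ, HasDerivAt ψ (φ' (a + t * d) * d - φ' a * d - Γ * t * d ^ 2) t := by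
    intro t
    have h1 : HasDerivAt (fun t : ℝ => a + t * d) d t := by
      simpa using ((hasDerivAt_id t).mul_const d).const_add a
    have h2 : HasDerivAt (fun t : ℝ => φ (a + t * d)) (φ' (a + t * d) * d) t :=
      (hφ (a + t * d)).comp t h1
    have h3 : HasDerivAt (fun t : ℝ => t * (φ' a * d)) (φ' a * d) t := by
      simpa using (hasDerivAt_id t).mul_const (φ' a * d)
    have h4 : HasDerivAt (fun t : ℝ => Γ / 2 * t ^ 2 * d ^ 2) (Γ * t * d ^ 2) t := by
      have := ((hasDerivAt_pow 2 t).const_mul (Γ / 2)).mul_const (d ^ 2)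
      exact this.congr_deriv (by push_cast; ring)
    exact (h2.sub h3).sub h4
  have hmono : AntitoneOn ψ (Set.Icc (0 : ℝ) 1) := by
    apply antitoneOn_of_deriv_nonpos (convex_Icc 0 1)
    · exact fun t _ => ((hψd t).continuousAt).continuousWithinAt
    · intro t ht
      exact ((hψd t).differentiableAt).differentiableWithinAt
    · intro t ht
      rw [interior_Icc] at ht
      rw [(hψd t).deriv]
      have key : φ' (a + t * d) * d - φ' a * d ≤ Γ * t * d ^ 2 := by
        have h1 : |φ' (a + t * d) - φ' a| ≤ Γ * |t * d| := hlip a (t * d)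
        have h2 : (φ' (a + t * d) - φ' a) * d ≤ |φ' (a + t * d) - φ' a| * |d| := by
          calc (φ' (a + t * d) - φ' a) * d ≤ |(φ' (a + t * d) - φ' a) * d| := le_abs_self _
          _ = |φ' (a + t * d) - φ' a| * |d| := abs_mul _ _
        have h3 : |t * d| * |d| = t * d ^ 2 := by
          rw [abs_mul, abs_of_pos ht.1, mul_assoc, ← pow_two, sq_abs]
        nlinarith [mul_le_mul_of_nonneg_right h1 (abs_nonneg d), abs_nonneg d]
      linarith
  have := hmono (Set.left_mem_Icc.mpr zero_le_one) (Set.right_mem_Icc.mpr zero_le_one) zero_le_one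
  simp only [hψ] at this
  simp only [one_mul, zero_mul, mul_zero, sub_zero, one_pow] at this
  norm_num at this
  linarith

/-- First progress inequality with an inexact gradient (Lemma on discrete improvement
of `F`, first half): if `Γ ≥ L_k` for every coordinate Lipschitz constant `L_k` of the
convex differentiable function `f`, each `Ψ_k` is convex, `F = f + Σ_k Ψ_k`, and the
coordinate-`j` update `d̃_j` is the proximal step computed from the inexact gradient
`g̃_j`, then `F(xᵗ) − F(xᵗ⁺¹) ≥ (Γ/4) d̃_j² − (1/Γ)(g_j − g̃_j)²`. -/
theorem progress_quadratic
    {n : ℕ} (f : (Fin n → ℝ) → ℝ) (hf : ConvexOn ℝ Set.univ f)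
    (Ψ : Fin n → ℝ → ℝ) (hΨ : ∀ k, ConvexOn ℝ Set.univ (Ψ k))
    (grad : (Fin n → ℝ) → Fin n → ℝ)
    (hderiv : ∀ (x : Fin n → ℝ) (k : Fin n),
      HasDerivAt (fun r => f (Function.update x k r)) (grad x k) (x k))
    (L : Fin n → ℝ) (Γ : ℝ) (hΓpos : 0 < Γ) (hΓ : ∀ k, L k ≤ Γ)
    (hLip : ∀ (x : Fin n → ℝ) (k : Fin n) (r : ℝ),
      |grad (Function.update x k (x k + r)) k - grad x k| ≤ L k * |r|)
    (j : Fin n) (xt : Fin n → ℝ) (gtil dtil : ℝ)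
    (hdtil : ∀ d : ℝ,
      gtil * dtil + Γ * dtil ^ 2 / 2 + Ψ j (xt j + dtil) - Ψ j (xt j)
        ≤ gtil * d + Γ * d ^ 2 / 2 + Ψ j (xt j + d) - Ψ j (xt j)) :
    (f xt + ∑ k, Ψ k (xt k))
      - (f (Function.update xt j (xt j + dtil))
          + ∑ k, Ψ k (Function.update xt j (xt j + dtil) k))
      ≥ Γ / 4 * dtil ^ 2 - 1 / Γ * (grad xt j - gtil) ^ 2 := by
  set g := grad xt j with hg
  -- sums differ only at j
  have hsum : ∑ k, Ψ k (Function.update xt j (xt j + dtil) k)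
      = ∑ k, Ψ k (xt k) - Ψ j (xt j) + Ψ j (xt j + dtil) := by
    have h1 : ∀ k : Fin n, Ψ k (Function.update xt j (xt j + dtil) k)
        = Function.update (fun k => Ψ k (xt k)) j (Ψ j (xt j + dtil)) k := by
      intro k
      rcases eq_or_ne k j with h | h
      · subst h; simp
      · simp [Function.update_of_ne h]
    rw [Finset.sum_congr rfl (fun k _ => h1 k), Finset.sum_update_of_mem (Finset.mem_univ j),
      Finset.sum_eq_sum_sdiff_singleton_add (Finset.mem_univ j) (fun k => Ψ k (xt k))]
    ring
  -- descent lemma for coordinate j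
  have hdesc : f (Function.update xt j (xt j + dtil))
      ≤ f xt + g * dtil + Γ / 2 * dtil ^ 2 := by
    set φ : ℝ → ℝ := fun s => f (Function.update xt j s) with hφdef
    set φ' : ℝ → ℝ := fun s => grad (Function.update xt j s) j with hφ'def
    have hφ : ∀ s, HasDerivAt φ (φ' s) s := by
      intro s
      have := hderiv (Function.update xt j s) j
      simpa [hφdef, hφ'def, Function.update_idem] using this
    have hlip : ∀ a r, |φ' (a + r) - φ' a| ≤ Γ * |r| := by
      intro a r
      have h1 := hLip (Function.update xt j a) j r
      rw [Function.update_self, Function.update_idem] at h1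
      refine h1.trans ?_
      exact mul_le_mul_of_nonneg_right (hΓ j) (abs_nonneg r)
    have h := descent_1d φ φ' hφ Γ hΓpos.le hlip (xt j) dtil
    have hφ0 : φ (xt j) = f xt := by simp [hφdef]
    have hφ' : φ' (xt j) = g := by simp [hφ'def, hg]
    rw [hφ0, hφ'] at h
    exact h
  -- strong optimality of dtil
  have hopt : gtil * dtil + (Ψ j (xt j + dtil) - Ψ j (xt j)) + Γ * dtil ^ 2 ≤ 0 := by
    set A := gtil * dtil + (Ψ j (xt j + dtil) - Ψ j (xt j)) + Γ * dtil ^ 2 with hA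
    have key : ∀ t : ℝ, 0 < t → t ≤ 1 → A ≤ Γ * t * dtil ^ 2 / 2 := by
      intro t ht0 ht1
      have hconv := (hΨ j).2 (Set.mem_univ (xt j + dtil)) (Set.mem_univ (xt j))
        (by linarith : (0:ℝ) ≤ 1 - t) ht0.le (by ring : (1 - t) + t = 1)
      simp only [smul_eq_mul] at hconv
      have heq : (1 - t) * (xt j + dtil) + t * xt j = xt j + (1 - t) * dtil := by ring
      rw [heq] at hconv
      have h1 := hdtil ((1 - t) * dtil)
      nlinarith [h1, hconv]
    by_cases hd : dtil = 0
    · have := key 1 one_pos le_rfl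
      simp [hd] at this ⊢
      simpa [hA, hd] using this
    · by_contra hcon
      push_neg at hcon
      have hdsq : 0 < dtil ^ 2 := by positivity
      set t := min 1 (A / (Γ * dtil ^ 2)) with htdef
      have ht0 : 0 < t := lt_min one_pos (by positivity)
      have ht1 : t ≤ 1 := min_le_left _ _
      have h := key t ht0 ht1
      have ht2 : t ≤ A / (Γ * dtil ^ 2) := min_le_right _ _
      have : Γ * t * dtil ^ 2 ≤ A := by
        have := mul_le_mul_of_nonneg_left ht2 (by positivity : (0:ℝ) ≤ Γ * dtil ^ 2)
        rw [mul_div_cancel₀ _ (by positivity : Γ * dtil ^ 2 ≠ 0)] at this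
        nlinarith
      linarith
  -- combine
  rw [hsum]
  have hfin : Γ / 4 * dtil ^ 2 + 1 / Γ * (g - gtil) ^ 2 - (g - gtil) * dtil ≥ 0 := by
    have h := sq_nonneg (Γ * dtil - 2 * (g - gtil))
    have h2 : 0 < 4 * Γ := by linarith
    rw [ge_iff_le, ← sub_nonneg]
    have : Γ / 4 * dtil ^ 2 + 1 / Γ * (g - gtil) ^ 2 - (g - gtil) * dtil - 0
        = (Γ * dtil - 2 * (g - gtil)) ^ 2 / (4 * Γ) := by
      field_simp
      ring
    rw [this]
    positivity
  nlinarith [hdesc, hopt, hfin]
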